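/- Every normal topometric space is completely regular: the family of continuous 1-Lipschitz functions X → ℂ separates points from closed sets and satisfies d(x,y) = sup { |f(x) − f(y)| : f continuous 1-Lipschitz } for all x, y ∈ X. -/

import Mathlib

open scoped ENNReal NNReal
open Set

structure TopometricOn (X : Type*) [TopologicalSpace X] where
  d : X → X → ℝ≥0∞
  d_self : ∀ x, d x x = 0
  eq_of_d_eq_zero : ∀ x y, d x y = 0 → x = y
  d_symm : ∀ x y, d x y = d y x
  d_triangle : ∀ x y z, d x z ≤ d x y + d y z
  lsc : LowerSemicontinuous fun p : X × X => d p.1 p.2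
  refines : ∀ U : Set X, IsOpen U → ∀ x ∈ U, ∃ ε > (0 : ℝ≥0∞), ∀ y, d x y < ε → y ∈ U

namespace TopometricOn

variable {X : Type*} [TopologicalSpace X]

noncomputable def setD (T : TopometricOn X) (F G : Set X) : ℝ≥0∞ :=
  ⨅ x ∈ F, ⨅ y ∈ G, T.d x y

noncomputable def ptD (T : TopometricOn X) (x : X) (F : Set X) : ℝ≥0∞ :=
  ⨅ y ∈ F, T.d x y

def IsNormal (T : TopometricOn X) : Prop :=
  (∀ F G : Set X, IsClosed F → IsClosed G → 0 < T.setD F G →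
      ∃ U V : Set X, IsOpen U ∧ IsOpen V ∧ F ⊆ U ∧ G ⊆ V ∧ Disjoint U V) ∧
  (∀ F : Set X, IsClosed F → ∀ r : ℝ≥0∞, 0 < r → IsClosed {x | T.ptD x F ≤ r})

variable (T : TopometricOn X)

lemma ptD_le_d {x y : X} {F : Set X} (hy : y ∈ F) : T.ptD x F ≤ T.d x y := iInf₂_le y hy

lemma setD_le_d {x y : X} {F G : Set X} (hx : x ∈ F) (hy : y ∈ G) : T.setD F G ≤ T.d x y :=
  (iInf₂_le x hx).trans (iInf₂_le y hy)

lemma le_setD {F G : Set X} {c : ℝ≥0∞} (h : ∀ x ∈ F, ∀ y ∈ G, c ≤ T.d x y) :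
    c ≤ T.setD F G :=
  le_iInf₂ fun x hx => le_iInf₂ fun y hy => h x hx y hy

lemma setD_le_ptD_add (F G : Set X) (z w : X) :
    T.setD F G ≤ T.ptD z F + T.d z w + T.ptD w G := by
  by_cases hF : T.ptD z F = ∞
  · simp [hF]
  by_cases hG : T.ptD w G = ∞
  · simp [hG]
  refine ENNReal.le_of_forall_pos_le_add fun ε hε _ => ?_
  have hε2 : (0:ℝ≥0∞) < (ε:ℝ≥0∞)/2 := by
    simp [ENNReal.div_pos_iff, hε.ne']
  have h1 : T.ptD z F < T.ptD z F + ε/2 := ENNReal.lt_add_right hF hε2.ne'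
  have h2 : T.ptD w G < T.ptD w G + ε/2 := ENNReal.lt_add_right hG hε2.ne'
  rw [ptD] at h1 h2
  simp only [iInf_lt_iff] at h1 h2
  obtain ⟨x, hx, hxlt⟩ := h1
  obtain ⟨y, hy, hylt⟩ := h2
  calc T.setD F G ≤ T.d x y := T.setD_le_d hx hy
    _ ≤ T.d x z + T.d z y := T.d_triangle _ _ _
    _ ≤ T.d x z + (T.d z w + T.d w y) := by gcongr; exact T.d_triangle _ _ _
    _ = T.d z x + T.d z w + T.d w y := by rw [T.d_symm x z]; ring
    _ ≤ (T.ptD z F + ε/2) + T.d z w + (T.ptD w G + ε/2) := by gcongr <;> [exact hxlt.le; exact hylt.le]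
    _ = T.ptD z F + T.d z w + T.ptD w G + ((ε:ℝ≥0∞)/2 + ε/2) := by ring
    _ = T.ptD z F + T.d z w + T.ptD w G + ε := by rw [ENNReal.add_halves]

include T in
lemma isClosed_singleton' (x : X) : IsClosed ({x} : Set X) := by
  refine isClosed_of_closure_subset fun y hy => ?_
  by_contra hne
  have hxy : x ≠ y := fun h => hne (by simp [h.symm])
  have hd : (0:ℝ≥0∞) < T.d x y := by
    rcases eq_or_ne (T.d x y) 0 with h | h
    · exact absurd (T.eq_of_d_eq_zero x y h) hxy
    · exact pos_iff_ne_zero.mpr h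
  have hev := T.lsc (x, y) 0 hd
  rw [eventually_nhds_iff] at hev
  obtain ⟨W, hW, hWopen, hWmem⟩ := hev
  rw [isOpen_prod_iff] at hWopen
  obtain ⟨u, v, hu, hv, hxu, hyv, huv⟩ := hWopen x y hWmem
  have hxv : x ∈ v := by
    have := mem_closure_iff.mp hy v hv hyv
    simpa using this
  have := hW (x, x) (huv (mk_mem_prod hxu hxv))
  simp [T.d_self] at this

include T in
lemma chain_step (hT : T.IsNormal) {G : Set X} (hG : IsClosed G) (r : ℝ)
    (e : ℕ → ℝ) (heb : ∀ k, 0 ≤ e k ∧ e k < r) (n : ℕ) (Cs : ℕ → Set X)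
    (hcl : ∀ k, IsClosed (Cs k))
    (hpair : ∀ i ≤ n, ∀ j ≤ n, e i < e j →
      ENNReal.ofReal (e j - e i) < T.setD (Cs i) (interior (Cs j))ᶜ)
    (hGpair : ∀ i ≤ n, ENNReal.ofReal (r - e i) < T.setD (Cs i) G) :
    ∃ D : Set X, IsClosed D ∧
      (∀ i ≤ n, e i < e (n+1) →
        ENNReal.ofReal (e (n+1) - e i) < T.setD (Cs i) (interior D)ᶜ) ∧
      (∀ j ≤ n, e (n+1) < e j →
        ENNReal.ofReal (e j - e (n+1)) < T.setD D (interior (Cs j))ᶜ) ∧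
      ENNReal.ofReal (r - e (n+1)) < T.setD D G := by
  classical
  set m := e (n+1) with hm
  set δ₀ : ℝ≥0∞ := (((Finset.range (n+1)) ×ˢ (Finset.range (n+1))).inf fun p =>
      if e p.1 < e p.2 then T.setD (Cs p.1) (interior (Cs p.2))ᶜ - ENNReal.ofReal (e p.2 - e p.1)
      else ⊤) ⊓
    (((Finset.range (n+1)).inf fun i => T.setD (Cs i) G - ENNReal.ofReal (r - e i)) ⊓ 1)
    with hδ₀def
  have hδ₀pos : 0 < δ₀ := by
    refine lt_inf_iff.mpr ⟨?_, lt_inf_iff.mpr ⟨?_, zero_lt_one⟩⟩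
    · refine (Finset.lt_inf_iff (by simp)).mpr fun p hp => ?_
      rw [Finset.mem_product, Finset.mem_range, Finset.mem_range] at hp
      split_ifs with h
      · exact tsub_pos_iff_lt.mpr
          (hpair p.1 (Nat.lt_succ_iff.mp hp.1) p.2 (Nat.lt_succ_iff.mp hp.2) h)
      · simp
    · refine (Finset.lt_inf_iff (by simp)).mpr fun i hi => ?_
      exact tsub_pos_iff_lt.mpr (hGpair i (Nat.lt_succ_iff.mp (Finset.mem_range.mp hi)))
  have hδ₀le1 : δ₀ ≤ 1 := inf_le_right.trans inf_le_right
  set δ : ℝ≥0∞ := δ₀ / 3 with hδdef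
  have hδpos : 0 < δ := ENNReal.div_pos hδ₀pos.ne' (by norm_num)
  have h3δ : 3 * δ ≤ δ₀ := ENNReal.mul_div_le
  have hδle : δ ≤ δ₀ := le_trans (le_mul_of_one_le_left zero_le (by norm_num)) h3δ
  have hδ1 : δ ≤ 1 := hδle.trans hδ₀le1
  have hδne : δ ≠ ∞ := (hδ1.trans_lt (by norm_num)).ne
  -- quantitative form of invariants
  have hq : ∀ i ≤ n, ∀ j ≤ n, e i < e j →
      ENNReal.ofReal (e j - e i) + 3 * δ ≤ T.setD (Cs i) (interior (Cs j))ᶜ := by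
    intro i hi j hj hij
    have hmem : (i, j) ∈ (Finset.range (n+1)) ×ˢ (Finset.range (n+1)) := by
      simp [Finset.mem_product, Nat.lt_succ_iff, hi, hj]
    have h1 : δ₀ ≤ T.setD (Cs i) (interior (Cs j))ᶜ - ENNReal.ofReal (e j - e i) := by
      refine inf_le_left.trans ?_
      have := Finset.inf_le (f := fun p : ℕ × ℕ =>
        if e p.1 < e p.2 then T.setD (Cs p.1) (interior (Cs p.2))ᶜ - ENNReal.ofReal (e p.2 - e p.1)
        else ⊤) hmem
      simpa [hij] using this
    calc ENNReal.ofReal (e j - e i) + 3 * δ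
        ≤ ENNReal.ofReal (e j - e i) + (T.setD (Cs i) (interior (Cs j))ᶜ - ENNReal.ofReal (e j - e i)) := by
          gcongr; exact h3δ.trans h1
      _ = T.setD (Cs i) (interior (Cs j))ᶜ :=
          add_tsub_cancel_of_le (hpair i hi j hj hij).le
  have hqG : ∀ i ≤ n, ENNReal.ofReal (r - e i) + 3 * δ ≤ T.setD (Cs i) G := by
    intro i hi
    have h1 : δ₀ ≤ T.setD (Cs i) G - ENNReal.ofReal (r - e i) := by
      refine inf_le_right.trans (inf_le_left.trans ?_)
      exact Finset.inf_le (Finset.mem_range.mpr (Nat.lt_succ_iff.mpr hi))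
    calc ENNReal.ofReal (r - e i) + 3 * δ
        ≤ ENNReal.ofReal (r - e i) + (T.setD (Cs i) G - ENNReal.ofReal (r - e i)) := by
          gcongr; exact h3δ.trans h1
      _ = T.setD (Cs i) G := add_tsub_cancel_of_le (hGpair i hi).le
  -- the two sides
  set A : Set X := ⋃ i ∈ {i : ℕ | i ≤ n ∧ e i < m},
      {z | T.ptD z (Cs i) ≤ ENNReal.ofReal (m - e i) + δ} with hAdef
  set B : Set X := (⋃ j ∈ {j : ℕ | j ≤ n ∧ m < e j},
      {z | T.ptD z (interior (Cs j))ᶜ ≤ ENNReal.ofReal (e j - m) + δ}) ∪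
      {z | T.ptD z G ≤ ENNReal.ofReal (r - m) + δ} with hBdef
  have hradpos : ∀ s : ℝ, (0:ℝ≥0∞) < ENNReal.ofReal s + δ :=
    fun s => hδpos.trans_le (le_add_self)
  have hAfin : {i : ℕ | i ≤ n ∧ e i < m}.Finite :=
    (Set.finite_Iic n).subset fun i hi => hi.1
  have hBfin : {j : ℕ | j ≤ n ∧ m < e j}.Finite :=
    (Set.finite_Iic n).subset fun j hj => hj.1
  have hAcl : IsClosed A :=
    hAfin.isClosed_biUnion fun i _ => hT.2 (Cs i) (hcl i) _ (hradpos _)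
  have hBcl : IsClosed B := by
    refine IsClosed.union (hBfin.isClosed_biUnion fun j _ => ?_) (hT.2 G hG _ (hradpos _))
    exact hT.2 _ (isOpen_interior.isClosed_compl) _ (hradpos _)
  -- distance between A and B
  have hAB : ∀ z ∈ A, ∀ w ∈ B, δ ≤ T.d z w := by
    intro z hz w hw
    rw [hAdef, mem_iUnion₂] at hz
    obtain ⟨i, ⟨hin, him⟩, hzi⟩ := hz
    have cancel : ∀ {K d' : ℝ≥0∞}, K ≠ ∞ → K + δ ≤ K + d' → δ ≤ d' := by
      intro K d' hK h
      exact (ENNReal.add_le_add_iff_left hK).mp h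
    rw [hBdef] at hw
    rcases hw with hw | hw
    · rw [mem_iUnion₂] at hw
      obtain ⟨j, ⟨hjn, hjm⟩, hwj⟩ := hw
      have hij : e i < e j := him.trans hjm
      have key := (hq i hin j hjn hij).trans
        (T.setD_le_ptD_add (Cs i) (interior (Cs j))ᶜ z w)
      have hsum : ENNReal.ofReal (e j - e i) =
          ENNReal.ofReal (m - e i) + ENNReal.ofReal (e j - m) := by
        rw [← ENNReal.ofReal_add (by linarith) (by linarith)]
        ring_nf
      refine cancel (K := ENNReal.ofReal (m - e i) + ENNReal.ofReal (e j - m) + 2 * δ)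
        (by finiteness) ?_
      calc ENNReal.ofReal (m - e i) + ENNReal.ofReal (e j - m) + 2 * δ + δ
          = ENNReal.ofReal (e j - e i) + 3 * δ := by rw [hsum]; ring
        _ ≤ T.ptD z (Cs i) + T.d z w + T.ptD w (interior (Cs j))ᶜ := key
        _ ≤ (ENNReal.ofReal (m - e i) + δ) + T.d z w + (ENNReal.ofReal (e j - m) + δ) := by
            gcongr <;> [exact hzi; exact hwj]
        _ = ENNReal.ofReal (m - e i) + ENNReal.ofReal (e j - m) + 2 * δ + T.d z w := by ring
    · have key := (hqG i hin).trans (T.setD_le_ptD_add (Cs i) G z w)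
      have hsum : ENNReal.ofReal (r - e i) =
          ENNReal.ofReal (m - e i) + ENNReal.ofReal (r - m) := by
        rw [← ENNReal.ofReal_add (by linarith) (by linarith [(heb (n+1)).2])]
        ring_nf
      refine cancel (K := ENNReal.ofReal (m - e i) + ENNReal.ofReal (r - m) + 2 * δ)
        (by finiteness) ?_
      calc ENNReal.ofReal (m - e i) + ENNReal.ofReal (r - m) + 2 * δ + δ
          = ENNReal.ofReal (r - e i) + 3 * δ := by rw [hsum]; ring
        _ ≤ T.ptD z (Cs i) + T.d z w + T.ptD w G := key
        _ ≤ (ENNReal.ofReal (m - e i) + δ) + T.d z w + (ENNReal.ofReal (r - m) + δ) := by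
            gcongr <;> [exact hzi; exact hw]
        _ = ENNReal.ofReal (m - e i) + ENNReal.ofReal (r - m) + 2 * δ + T.d z w := by ring
  have hABpos : 0 < T.setD A B :=
    hδpos.trans_le (T.le_setD fun z hz w hw => hAB z hz w hw)
  obtain ⟨U, V, hU, hV, hAU, hBV, hUV⟩ := hT.1 A B hAcl hBcl hABpos
  refine ⟨Vᶜ, hV.isClosed_compl, ?_, ?_, ?_⟩
  · -- pairs (i, new)
    intro i hin him
    have hUint : U ⊆ interior Vᶜ :=
      interior_maximal (fun u hu => (disjoint_left.mp hUV hu)) hU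
    have hsub : (interior Vᶜ)ᶜ ⊆ Aᶜ := compl_subset_compl.mpr (hAU.trans hUint)
    have hlow : ENNReal.ofReal (m - e i) + δ ≤ T.setD (Cs i) (interior Vᶜ)ᶜ := by
      refine T.le_setD fun x hx z hz => ?_
      have hzA : z ∉ A := fun h => hsub hz h
      have : ¬ T.ptD z (Cs i) ≤ ENNReal.ofReal (m - e i) + δ := by
        intro hle
        exact hzA (mem_iUnion₂.mpr ⟨i, ⟨hin, him⟩, hle⟩)
      have h1 : ENNReal.ofReal (m - e i) + δ ≤ T.ptD z (Cs i) := (not_le.mp this).le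
      exact h1.trans ((T.ptD_le_d hx).trans_eq (T.d_symm z x))
    refine lt_of_lt_of_le ?_ hlow
    exact ENNReal.lt_add_right ENNReal.ofReal_ne_top hδpos.ne'
  · -- pairs (new, j)
    intro j hjn hjm
    have hlow : ENNReal.ofReal (e j - m) + δ ≤ T.setD Vᶜ (interior (Cs j))ᶜ := by
      refine T.le_setD fun z hz w hw => ?_
      have hzB : z ∉ B := fun h => hz (hBV h)
      have : ¬ T.ptD z (interior (Cs j))ᶜ ≤ ENNReal.ofReal (e j - m) + δ := by
        intro hle
        exact hzB (Or.inl (mem_iUnion₂.mpr ⟨j, ⟨hjn, hjm⟩, hle⟩))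
      exact (not_le.mp this).le.trans (T.ptD_le_d hw)
    exact lt_of_lt_of_le (ENNReal.lt_add_right ENNReal.ofReal_ne_top hδpos.ne') hlow
  · -- G pair
    have hlow : ENNReal.ofReal (r - m) + δ ≤ T.setD Vᶜ G := by
      refine T.le_setD fun z hz w hw => ?_
      have hzB : z ∉ B := fun h => hz (hBV h)
      have : ¬ T.ptD z G ≤ ENNReal.ofReal (r - m) + δ := fun hle => hzB (Or.inr hle)
      exact (not_le.mp this).le.trans (T.ptD_le_d hw)
    exact lt_of_lt_of_le (ENNReal.lt_add_right ENNReal.ofReal_ne_top hδpos.ne') hlow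

include T in
lemma exists_chain (hT : T.IsNormal) {F G : Set X} (hF : IsClosed F) (hG : IsClosed G)
    (r : ℝ) (e : ℕ → ℝ) (he0 : e 0 = 0) (heb : ∀ k, 0 ≤ e k ∧ e k < r)
    (hFG : ENNReal.ofReal r < T.setD F G) :
    ∃ C : ℕ → Set X, C 0 = F ∧ (∀ k, IsClosed (C k)) ∧
      (∀ i j, e i < e j → ENNReal.ofReal (e j - e i) < T.setD (C i) (interior (C j))ᶜ) ∧
      (∀ i, ENNReal.ofReal (r - e i) < T.setD (C i) G) := by
  classical
  let Good : ℕ → (ℕ → Set X) → Prop := fun n Cs =>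
    Cs 0 = F ∧ (∀ k, IsClosed (Cs k)) ∧
    (∀ i ≤ n, ∀ j ≤ n, e i < e j →
      ENNReal.ofReal (e j - e i) < T.setD (Cs i) (interior (Cs j))ᶜ) ∧
    (∀ i ≤ n, ENNReal.ofReal (r - e i) < T.setD (Cs i) G)
  have base : Good 0 (fun _ => F) := by
    refine ⟨rfl, fun _ => hF, ?_, ?_⟩
    · intro i hi j hj hij
      interval_cases i
      interval_cases j
      exact absurd hij (lt_irrefl _)
    · intro i hi
      interval_cases i
      simpa [he0] using hFG
  have step : ∀ n (Cs : ℕ → Set X), Good n Cs →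
      ∃ Cs' : ℕ → Set X, Good (n+1) Cs' ∧ ∀ k ≤ n, Cs' k = Cs k := by
    rintro n Cs ⟨h0, hcl, hp, hpG⟩
    obtain ⟨D, hDcl, hD1, hD2, hD3⟩ := T.chain_step hT hG r e heb n Cs hcl hp hpG
    refine ⟨Function.update Cs (n+1) D, ⟨?_, ?_, ?_, ?_⟩, ?_⟩
    · rw [Function.update_of_ne (by omega)]; exact h0
    · intro k
      rcases eq_or_ne k (n+1) with rfl | hk
      · rw [Function.update_self]; exact hDcl
      · rw [Function.update_of_ne hk]; exact hcl k
    · intro i hi j hj hij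
      rcases Nat.lt_succ_iff_lt_or_eq.mp (Nat.lt_succ_iff.mpr hi) with hi' | rfl
      · rcases Nat.lt_succ_iff_lt_or_eq.mp (Nat.lt_succ_iff.mpr hj) with hj' | rfl
        · rw [Function.update_of_ne (by omega), Function.update_of_ne (by omega)]
          exact hp i (by omega) j (by omega) hij
        · rw [Function.update_of_ne (by omega), Function.update_self]
          exact hD1 i (by omega) hij
      · rcases Nat.lt_succ_iff_lt_or_eq.mp (Nat.lt_succ_iff.mpr hj) with hj' | rfl
        · rw [Function.update_self, Function.update_of_ne (by omega)]
          exact hD2 j (by omega) hij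
        · exact absurd hij (lt_irrefl _)
    · intro i hi
      rcases Nat.lt_succ_iff_lt_or_eq.mp (Nat.lt_succ_iff.mpr hi) with hi' | rfl
      · rw [Function.update_of_ne (by omega)]
        exact hpG i (by omega)
      · rw [Function.update_self]
        exact hD3
    · intro k hk
      exact Function.update_of_ne (by omega) _ _
  let seq : (n : ℕ) → {Cs : ℕ → Set X // Good n Cs} :=
    Nat.rec ⟨fun _ => F, base⟩
      (fun n prev => ⟨Classical.choose (step n prev.1 prev.2),
        (Classical.choose_spec (step n prev.1 prev.2)).1⟩)
  have hseq_ext : ∀ n, ∀ k ≤ n, (seq (n+1)).1 k = (seq n).1 k := by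
    intro n k hk
    exact (Classical.choose_spec (step n (seq n).1 (seq n).2)).2 k hk
  set C : ℕ → Set X := fun n => (seq n).1 n with hCdef
  have hstable : ∀ n, ∀ k ≤ n, (seq n).1 k = C k := by
    intro n
    induction n with
    | zero => intro k hk; interval_cases k; rfl
    | succ n ih =>
      intro k hk
      rcases Nat.lt_succ_iff_lt_or_eq.mp (Nat.lt_succ_iff.mpr hk) with hk' | rfl
      · rw [hseq_ext n k (by omega)]; exact ih k (by omega)
      · rfl
  refine ⟨C, ?_, fun k => (seq k).2.2.1 k, ?_, ?_⟩
  · show (seq 0).1 0 = F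
    rfl
  · intro i j hij
    have h := (seq (max i j)).2.2.2.1 i (le_max_left _ _) j (le_max_right _ _) hij
    rwa [hstable _ i (le_max_left _ _), hstable _ j (le_max_right _ _)] at h
  · intro i
    have h := (seq i).2.2.2.2 i le_rfl
    rwa [hstable _ i le_rfl] at h

include T in
lemma exists_urysohn (hT : T.IsNormal) {F G : Set X} (hF : IsClosed F) (hG : IsClosed G)
    (r : ℝ) (hr : 0 < r) (hFG : ENNReal.ofReal r < T.setD F G) :
    ∃ f : X → ℝ, Continuous f ∧ (∀ a b, edist (f a) (f b) ≤ T.d a b) ∧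
      (∀ z ∈ F, f z = 0) ∧ (∀ z ∈ G, f z = r) := by
  classical
  -- a dense enumeration of rationals in (0, r), with e 0 = 0
  obtain ⟨φ, hφ⟩ := exists_surjective_nat ℚ
  obtain ⟨e, he0, heb, hdense⟩ : ∃ e : ℕ → ℝ, e 0 = 0 ∧ (∀ k, 0 ≤ e k ∧ e k < r) ∧
      ∀ a b : ℝ, 0 ≤ a → a < b → b ≤ r → ∃ n, a < e n ∧ e n < b := by
    refine ⟨fun n => Nat.casesOn n 0 (fun k =>
      if 0 < ((φ k : ℚ) : ℝ) ∧ ((φ k : ℚ) : ℝ) < r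
      then ((φ k : ℚ) : ℝ) else 0), rfl, ?_, ?_⟩
    · rintro (_ | k)
      · exact ⟨le_rfl, hr⟩
      · dsimp only
        split_ifs with h
        · exact ⟨(h.1).le, h.2⟩
        · exact ⟨le_rfl, hr⟩
    · intro a b ha hab hbr
      obtain ⟨q, hq1, hq2⟩ := exists_rat_btwn hab
      have hq0 : 0 < ((q : ℚ) : ℝ) := lt_of_le_of_lt ha hq1
      have hqr : ((q : ℚ) : ℝ) < r := lt_of_lt_of_le hq2 hbr
      obtain ⟨k, hk⟩ := hφ q
      refine ⟨k + 1, ?_⟩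
      dsimp only
      rw [hk, if_pos ⟨hq0, hqr⟩]
      exact ⟨hq1, hq2⟩
  obtain ⟨C, hC0, hCcl, hinv, hinvG⟩ := T.exists_chain hT hF hG r e he0 heb hFG
  set S : X → Set ℝ := fun z => insert r {t | ∃ n, z ∈ C n ∧ e n = t} with hSdef
  have hSne : ∀ z, (S z).Nonempty := fun z => ⟨r, mem_insert _ _⟩
  have hSbd : ∀ z, BddBelow (S z) := by
    intro z
    refine ⟨0, fun t ht => ?_⟩
    rcases ht with rfl | ⟨n, _, rfl⟩
    · exact hr.le
    · exact (heb n).1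
  set f : X → ℝ := fun z => sInf (S z) with hfdef
  have hf_le_r : ∀ z, f z ≤ r := fun z => csInf_le (hSbd z) (mem_insert _ _)
  have hf_nonneg : ∀ z, 0 ≤ f z := by
    intro z
    refine le_csInf (hSne z) fun t ht => ?_
    rcases ht with rfl | ⟨n, _, rfl⟩
    · exact hr.le
    · exact (heb n).1
  have hfC : ∀ z n, z ∈ C n → f z ≤ e n :=
    fun z n hz => csInf_le (hSbd z) (Or.inr ⟨n, hz, rfl⟩)
  have hmono : ∀ z i j, z ∈ C i → e i < e j → z ∈ interior (C j) := by
    intro z i j hz hij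
    by_contra hmem
    have h1 : T.setD (C i) (interior (C j))ᶜ ≤ T.d z z := T.setD_le_d hz (Set.mem_compl hmem)
    rw [T.d_self] at h1
    exact absurd (lt_of_le_of_lt zero_le (hinv i j hij)) (not_lt.mpr h1)
  have hCG : ∀ z n, z ∈ C n → z ∉ G := by
    intro z n hz hzG
    have h1 : T.setD (C n) G ≤ T.d z z := T.setD_le_d hz hzG
    rw [T.d_self] at h1
    exact absurd (lt_of_le_of_lt zero_le (hinvG n)) (not_lt.mpr h1)
  -- Lipschitz: the one-sided estimate
  have main : ∀ a b : X, ∀ D : ℝ, T.d b a < ENNReal.ofReal D → f a ≤ f b + D := by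
    intro a b D hd
    have hD0 : 0 < D := by
      by_contra h
      rw [ENNReal.ofReal_eq_zero.mpr (not_lt.mp h)] at hd
      exact absurd hd (by simp)
    have hdne : T.d b a ≠ ∞ := ne_top_of_lt (hd.trans_le le_top)
    refine le_of_forall_pos_le_add fun γ hγ => ?_
    have hlt : sInf (S b) < f b + γ := lt_add_of_le_of_pos (le_rfl) hγ
    obtain ⟨t₀, ht₀, htlt⟩ := (csInf_lt_iff (hSbd b) (hSne b)).mp hlt
    rcases ht₀ with rfl | ⟨i, hbi, rfl⟩
    · -- t₀ = r
      have : f a ≤ t₀ := hf_le_r a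
      linarith
    · by_cases h2 : e i + D < r
      · set s : ℝ := (T.d b a).toReal with hs
        have hsD : s < D := by
          rw [hs]
          exact (ENNReal.lt_ofReal_iff_toReal_lt hdne).mp hd
        have hs0 : 0 ≤ s := ENNReal.toReal_nonneg
        obtain ⟨j, hj1, hj2⟩ := hdense (e i + s) (e i + D)
          (by linarith [(heb i).1]) (by linarith) h2.le
        have hij : e i < e j := by linarith
        have hdlt : T.d b a < ENNReal.ofReal (e j - e i) := by
          have : T.d b a = ENNReal.ofReal s := (ENNReal.ofReal_toReal hdne).symm
          rw [this]
          exact (ENNReal.ofReal_lt_ofReal_iff (by linarith)).mpr (by linarith)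
        have hint : a ∈ interior (C j) := by
          by_contra hmem
          have := T.setD_le_d hbi (Set.mem_compl hmem)
          exact absurd (hdlt.trans (hinv i j hij)) (not_lt.mpr this)
        have : f a ≤ e j := hfC a j (interior_subset hint)
        linarith
      · have : f a ≤ r := hf_le_r a
        linarith
  have hlip : ∀ a b, edist (f a) (f b) ≤ T.d a b := by
    intro a b
    by_cases hab : T.d a b = ∞
    · rw [hab]; exact le_top
    have habs : |f a - f b| ≤ (T.d a b).toReal := by
      have key : ∀ u v : X, T.d u v ≠ ∞ → f v - f u ≤ (T.d u v).toReal := by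
        intro u v huv
        have : ∀ γ : ℝ, 0 < γ → f v ≤ f u + ((T.d u v).toReal + γ) := by
          intro γ hγ
          refine main v u ((T.d u v).toReal + γ) ?_
          rw [ENNReal.lt_ofReal_iff_toReal_lt huv]
          linarith
        have h2 : f v ≤ f u + (T.d u v).toReal := by
          refine le_of_forall_pos_le_add fun γ hγ => ?_
          have := this γ hγ
          linarith
        linarith
      have h1 := key a b hab
      have h2 := key b a (by rwa [T.d_symm b a])
      rw [T.d_symm b a] at h2
      rw [abs_sub_le_iff]
      exact ⟨h2, h1⟩
    rw [edist_dist, Real.dist_eq]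
    calc ENNReal.ofReal |f a - f b| ≤ ENNReal.ofReal (T.d a b).toReal :=
          ENNReal.ofReal_le_ofReal habs
      _ = T.d a b := ENNReal.ofReal_toReal hab
  -- continuity
  have hopen_lt : ∀ c : ℝ, IsOpen {z | f z < c} := by
    intro c
    rw [isOpen_iff_forall_mem_open]
    intro z hz
    obtain ⟨t₀, ht₀, htlt⟩ := (csInf_lt_iff (hSbd z) (hSne z)).mp hz
    rcases ht₀ with rfl | ⟨i, hzi, rfl⟩
    · exact ⟨univ, fun w _ => lt_of_le_of_lt (hf_le_r w) htlt, isOpen_univ, trivial⟩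
    · obtain ⟨j, hj1, hj2⟩ := hdense (e i) (min c r) (heb i).1
        (lt_min htlt (heb i).2) (min_le_right _ _)
      refine ⟨interior (C j), fun w hw => ?_, isOpen_interior, hmono z i j hzi hj1⟩
      exact lt_of_le_of_lt (hfC w j (interior_subset hw)) (lt_of_lt_of_le hj2 (min_le_left _ _))
  have hopen_gt : ∀ c : ℝ, IsOpen {z | c < f z} := by
    intro c
    rw [isOpen_iff_forall_mem_open]
    intro z hz
    by_cases hc : 0 ≤ c
    · obtain ⟨j, hj1, hj2⟩ := hdense c (f z) hc hz (hf_le_r z)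
      refine ⟨(C j)ᶜ, fun w hw => ?_, (hCcl j).isOpen_compl, fun h => ?_⟩
      · have : e j ≤ f w := by
          refine le_csInf (hSne w) fun t ht => ?_
          rcases ht with rfl | ⟨k, hwk, rfl⟩
          · exact (heb j).2.le
          · by_contra hlt
            exact hw (interior_subset (hmono w k j hwk (not_le.mp hlt)))
        exact lt_of_lt_of_le hj1 this
      · exact absurd (hfC z j h) (not_le.mpr (lt_of_lt_of_le hj2 le_rfl))
    · exact ⟨univ, fun w _ => lt_of_lt_of_le (not_le.mp hc) (hf_nonneg w), isOpen_univ, trivial⟩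
  have hcont : Continuous f := by
    refine continuous_iff_continuousAt.mpr fun z => ?_
    rw [ContinuousAt, Metric.tendsto_nhds]
    intro ε hε
    have hopen : IsOpen ({w | f w < f z + ε} ∩ {w | f z - ε < f w}) :=
      (hopen_lt _).inter (hopen_gt _)
    have hmem : z ∈ {w | f w < f z + ε} ∩ {w | f z - ε < f w} :=
      ⟨by simp [hε], by simp [hε]⟩
    filter_upwards [hopen.mem_nhds hmem] with w hw
    rw [Real.dist_eq, abs_sub_lt_iff]
    obtain ⟨h1, h2⟩ := hw
    simp only [Set.mem_setOf_eq] at h1 h2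
    constructor <;> linarith
  refine ⟨f, hcont, hlip, ?_, ?_⟩
  · intro z hz
    have h1 : f z ≤ 0 := by
      have := hfC z 0 (by rwa [hC0])
      rwa [he0] at this
    exact le_antisymm h1 (hf_nonneg z)
  · intro z hz
    have hempty : {t | ∃ n, z ∈ C n ∧ e n = t} = ∅ := by
      refine eq_empty_iff_forall_notMem.mpr fun t ⟨n, hn, _⟩ => hCG z n hn hz
    show sInf (S z) = r
    rw [hSdef]
    simp only [hempty, LawfulSingleton.insert_empty_eq]
    exact csInf_singleton r

end TopometricOn

def TopometricOn.IsCompletelyRegular {X : Type*} [TopologicalSpace X]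
    (T : TopometricOn X) : Prop :=
  (∀ F : Set X, IsClosed F → ∀ x ∉ F,
      ∃ f : X → ℂ, Continuous f ∧ (∀ a b, edist (f a) (f b) ≤ T.d a b) ∧
        ∃ t : ℂ, (∀ y ∈ F, f y = t) ∧ f x ≠ t) ∧
  (∀ x y : X, T.d x y =
      ⨆ f : {f : X → ℂ // Continuous f ∧ ∀ a b, edist (f a) (f b) ≤ T.d a b},
        edist (f.1 x) (f.1 y))

namespace TopometricOn

variable {X : Type*} [TopologicalSpace X]

/-- from a real urysohn function, get the complex package -/
lemma complex_package (T : TopometricOn X) {F G : Set X} (hF : IsClosed F) (hG : IsClosed G)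
    (r : ℝ) (hr : 0 < r) (hFG : ENNReal.ofReal r < T.setD F G) (hT : T.IsNormal) :
    ∃ f : X → ℂ, Continuous f ∧ (∀ a b, edist (f a) (f b) ≤ T.d a b) ∧
      (∀ z ∈ F, f z = 0) ∧ (∀ z ∈ G, f z = (r : ℂ)) := by
  obtain ⟨f, hcont, hlip, hf0, hfr⟩ := T.exists_urysohn hT hF hG r hr hFG
  refine ⟨fun z => ((f z : ℝ) : ℂ), Complex.continuous_ofReal.comp hcont, ?_, ?_, ?_⟩
  · intro a b
    rw [Complex.isometry_ofReal.edist_eq]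
    exact hlip a b
  · intro z hz
    show ((f z : ℝ) : ℂ) = 0
    rw [hf0 z hz]; norm_num
  · intro z hz
    show ((f z : ℝ) : ℂ) = (r : ℂ)
    rw [hfr z hz]

lemma exists_pos_real_lt {c : ℝ≥0∞} (hc : 0 < c) : ∃ ρ : ℝ, 0 < ρ ∧ ENNReal.ofReal ρ < c := by
  set μ := min c 1 with hμ
  have hμpos : 0 < μ := lt_min hc zero_lt_one
  have hμne : μ ≠ ∞ := ne_top_of_le_ne_top (by simp) (min_le_right _ _)
  refine ⟨(μ / 2).toReal, ?_, ?_⟩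
  · refine ENNReal.toReal_pos ?_ ?_
    · simp [ENNReal.div_eq_zero_iff, hμpos.ne']
    · exact (ENNReal.div_lt_top hμne (by norm_num)).ne
  · rw [ENNReal.ofReal_toReal (ENNReal.div_lt_top hμne (by norm_num)).ne]
    exact lt_of_lt_of_le (ENNReal.half_lt_self hμpos.ne' hμne) (min_le_left _ _)

end TopometricOn

/-- every normal topometric space is completely regular. -/
theorem isCompletelyRegular_of_isNormal {X : Type*} [TopologicalSpace X]
    (T : TopometricOn X) (hT : T.IsNormal) : T.IsCompletelyRegular := by
  constructor
  · intro F hF x hx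
    obtain ⟨ε, hε, hball⟩ := T.refines Fᶜ hF.isOpen_compl x hx
    have hsep : ε ≤ T.setD {x} F := by
      refine T.le_setD fun a ha y hy => ?_
      rcases ha with rfl
      by_contra h
      exact (hball y (not_le.mp h)) hy
    obtain ⟨ρ, hρ, hρlt⟩ := TopometricOn.exists_pos_real_lt (lt_of_lt_of_le hε hsep)
    obtain ⟨f, hcont, hlip, hf0, hfr⟩ := T.complex_package (T.isClosed_singleton' x) hF ρ hρ
      hρlt hT
    refine ⟨f, hcont, hlip, (ρ : ℂ), fun y hy => hfr y hy, ?_⟩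
    intro h
    have h0 : f x = 0 := hf0 x rfl
    rw [h0] at h
    exact hρ.ne' (Complex.ofReal_eq_zero.mp h.symm)
  · intro x y
    refine le_antisymm ?_ (iSup_le fun f => f.2.2 x y)
    refine le_of_forall_lt fun w hw => ?_
    obtain ⟨z, hwz, hzd⟩ := exists_between hw
    have hzne : z ≠ ∞ := ne_top_of_lt hzd
    have hz0 : z ≠ 0 := ((zero_le : 0 ≤ w).trans_lt hwz).ne'
    set c := z.toReal with hc
    have hc0 : 0 < c := ENNReal.toReal_pos hz0 hzne
    have hofc : ENNReal.ofReal c = z := ENNReal.ofReal_toReal hzne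
    have hsetD : ENNReal.ofReal c < T.setD {x} {y} := by
      rw [hofc]
      refine hzd.trans_le (T.le_setD fun a ha b hb => ?_)
      rcases ha with rfl; rcases hb with rfl
      exact le_rfl
    obtain ⟨f, hcont, hlip, hf0, hfc⟩ := T.complex_package (T.isClosed_singleton' x)
      (T.isClosed_singleton' y) c hc0 hsetD hT
    have hed : edist (f x) (f y) = z := by
      rw [hf0 x rfl, hfc y rfl, edist_dist, Complex.dist_eq]
      simp only [zero_sub, norm_neg]
      rw [Complex.norm_real, Real.norm_eq_abs, abs_of_pos hc0, hofc]
    calc w < z := hwz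
      _ = edist (f x) (f y) := hed.symm
      _ ≤ ⨆ f : {f : X → ℂ // Continuous f ∧ ∀ a b, edist (f a) (f b) ≤ T.d a b},
            edist (f.1 x) (f.1 y) := le_iSup
              (fun f : {f : X → ℂ // Continuous f ∧ ∀ a b, edist (f a) (f b) ≤ T.d a b} =>
                edist (f.1 x) (f.1 y)) ⟨f, hcont, hlip⟩
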